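/- Let f = (f_1,...,f_n): Ω ⊆ ℝ^n → ℝ^n be differentiable on an open set Ω with f(z) = 0 for some z ∈ Ω. Suppose the variable x_j can be eliminated from the equation f_i = 0 near z: there is a differentiable ψ: Ω^{(j)} → ℝ (where Ω^{(j)} is the projection of Ω deleting the j-th coordinate) such that x_j = ψ(x^{(j)}) whenever f_i(x) = 0. Define f̄: Ω^{(j)} → ℝ^{n-1} by substituting ψ for x_j in the remaining n-1 component functions f_k (k ≠ i). Then det J_f(z) = (-1)^{i+j} (∂f_i/∂x_j)(z) · det J_{f̄}(z^{(j)}), where J denotes the Jacobian matrix. -/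

import Mathlib

open Matrix

lemma insertNth_decomp {n : ℕ} (j : Fin (n+1)) (a : ℝ) (y : Fin n → ℝ) :
    j.insertNth a y = a • (Pi.single j 1 : Fin (n+1) → ℝ) + j.insertNth (0:ℝ) y := by
  funext m
  by_cases hm : m = j
  · subst hm; simp
  · obtain ⟨k, rfl⟩ := Fin.exists_succAbove_eq hm
    simp [Fin.insertNth_apply_succAbove, Pi.single_apply, (Fin.succAbove_ne j k)]

noncomputable def insertZeroCLM {n : ℕ} (j : Fin (n+1)) :
    (Fin n → ℝ) →L[ℝ] (Fin (n+1) → ℝ) :=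
  LinearMap.toContinuousLinearMap
    { toFun := fun y => j.insertNth (0:ℝ) y
      map_add' := by
        intro y y'; funext m
        by_cases hm : m = j
        · subst hm; simp
        · obtain ⟨k, rfl⟩ := Fin.exists_succAbove_eq hm
          simp [Fin.insertNth_apply_succAbove]
      map_smul' := by
        intro c y; funext m
        by_cases hm : m = j
        · subst hm; simp
        · obtain ⟨k, rfl⟩ := Fin.exists_succAbove_eq hm
          simp [Fin.insertNth_apply_succAbove] }

@[simp] lemma insertZeroCLM_apply {n : ℕ} (j : Fin (n+1)) (y : Fin n → ℝ) :
    insertZeroCLM j y = j.insertNth (0:ℝ) y := rfl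

lemma insertNth_zero_single {n : ℕ} (j : Fin (n+1)) (l : Fin n) :
    j.insertNth (0:ℝ) (Pi.single l 1) = (Pi.single (j.succAbove l) 1 : Fin (n+1) → ℝ) := by
  funext m
  by_cases hm : m = j
  · subst hm; simp [Pi.single_apply, (Fin.succAbove_ne m l).symm]
  · obtain ⟨k, rfl⟩ := Fin.exists_succAbove_eq hm
    simp [Fin.insertNth_apply_succAbove, Pi.single_apply, Fin.succAbove_right_inj]

/-- The Jacobian matrix of `f : (Fin m → ℝ) → (Fin m → ℝ)` at `z`:
its `(k, l)` entry is `∂ f_k / ∂ x_l (z)`. -/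
noncomputable def jacobianMatrix {m : ℕ} (f : (Fin m → ℝ) → (Fin m → ℝ))
    (z : Fin m → ℝ) : Matrix (Fin m) (Fin m) ℝ :=
  Matrix.of fun k l => fderiv ℝ (fun x => f x k) z (Pi.single l 1)

set_option maxHeartbeats 2000000 in
/-- Elimination of the variable `x_j` from the equation `f_i = 0` relates the
determinant of the Jacobian of `f` to that of the reduced system `f̄`. -/
theorem det_jacobian_elimination {n : ℕ}
    (Ω : Set (Fin (n + 1) → ℝ)) (hΩ : IsOpen Ω)
    (f : (Fin (n + 1) → ℝ) → (Fin (n + 1) → ℝ))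
    (hf : DifferentiableOn ℝ f Ω)
    (z : Fin (n + 1) → ℝ) (hz : z ∈ Ω) (hfz : f z = 0)
    (i j : Fin (n + 1)) (ψ : (Fin n → ℝ) → ℝ)
    (hψdiff : DifferentiableOn ℝ ψ ((fun x => x ∘ j.succAbove) '' Ω))
    (hψ : ∀ x ∈ Ω, f x i = 0 → x j = ψ (x ∘ j.succAbove)) :
    (jacobianMatrix f z).det =
      (-1 : ℝ) ^ ((i : ℕ) + (j : ℕ)) *
        fderiv ℝ (fun x => f x i) z (Pi.single j 1) *
        (jacobianMatrix
            (fun y k => f (j.insertNth (ψ y) y) (i.succAbove k))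
            (z ∘ j.succAbove)).det := by
  classical
  set w : Fin n → ℝ := z ∘ j.succAbove with hw_def
  -- the projection map is an open map
  have hproj : (fun x : Fin (n+1) → ℝ => x ∘ j.succAbove) =
      ⇑(LinearMap.toContinuousLinearMap (LinearMap.funLeft ℝ ℝ j.succAbove)) := rfl
  have hOpenImg : IsOpen ((fun x : Fin (n+1) → ℝ => x ∘ j.succAbove) '' Ω) := by
    rw [hproj]
    refine (ContinuousLinearMap.isOpenMap _ ?_) Ω hΩ
    intro y
    refine ⟨j.insertNth (0:ℝ) y, ?_⟩
    funext m
    simp [LinearMap.funLeft_apply]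
  have hwmem : w ∈ ((fun x : Fin (n+1) → ℝ => x ∘ j.succAbove) '' Ω) := ⟨z, hz, rfl⟩
  have hψat : DifferentiableAt ℝ ψ w :=
    hψdiff.differentiableAt (hOpenImg.mem_nhds hwmem)
  have hψz : ψ w = z j := (hψ z hz (by rw [hfz]; rfl)).symm
  set p : Fin n → ℝ := fun l => fderiv ℝ ψ w (Pi.single l 1) with hp_def
  set g : (Fin n → ℝ) → (Fin (n+1) → ℝ) := fun y => j.insertNth (ψ y) y with hg_def
  have hgw : g w = z := by
    rw [hg_def]; dsimp only; rw [hψz]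
    exact Fin.insertNth_self_removeNth j z
  have hgdecomp : g = fun y => ψ y • (Pi.single j 1 : Fin (n+1) → ℝ) + insertZeroCLM j y := by
    funext y; rw [hg_def]; exact insertNth_decomp j (ψ y) y
  set G : (Fin n → ℝ) →L[ℝ] (Fin (n+1) → ℝ) :=
    (fderiv ℝ ψ w).smulRight (Pi.single j 1) + insertZeroCLM j with hG_def
  have hgG : HasFDerivAt g G w := by
    rw [hgdecomp, hG_def]
    exact (hψat.hasFDerivAt.smul_const _).add (insertZeroCLM j).hasFDerivAt
  have hGsingle : ∀ l : Fin n, G (Pi.single l 1) =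
      (Pi.single (j.succAbove l) 1 : Fin (n+1) → ℝ) + p l • (Pi.single j 1 : Fin (n+1) → ℝ) := by
    intro l
    rw [hG_def]
    simp [insertNth_zero_single, hp_def, ContinuousLinearMap.smulRight_apply, add_comm]
  have hfd : ∀ k, DifferentiableAt ℝ (fun x => f x k) z := by
    intro k
    exact differentiableAt_pi.1 (hf.differentiableAt (hΩ.mem_nhds hz)) k
  -- the chain rule
  have chain : ∀ (k : Fin (n+1)),
      HasFDerivAt (fun y => f (g y) k) ((fderiv ℝ (fun x => f x k) z).comp G) w := by
    intro k
    have hk : HasFDerivAt (fun x => f x k) (fderiv ℝ (fun x => f x k) z) (g w) := by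
      rw [hgw]; exact (hfd k).hasFDerivAt
    exact (hk.comp w hgG : HasFDerivAt ((fun x => f x k) ∘ g) _ w)
  have chain_single : ∀ (k : Fin (n+1)) (l : Fin n),
      fderiv ℝ (fun y => f (g y) k) w (Pi.single l 1) =
        fderiv ℝ (fun x => f x k) z (Pi.single (j.succAbove l) 1) +
          p l * fderiv ℝ (fun x => f x k) z (Pi.single j 1) := by
    intro k l
    rw [(chain k).fderiv]
    rw [ContinuousLinearMap.comp_apply, hGsingle l, map_add, ContinuousLinearMap.map_smul,
      smul_eq_mul]
  -- the key analytic fact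
  have key : ∀ l : Fin n,
      fderiv ℝ (fun x => f x i) z (Pi.single (j.succAbove l) 1) +
        p l * fderiv ℝ (fun x => f x i) z (Pi.single j 1) = 0 := by
    intro l
    by_contra hA0
    set Aval : ℝ := fderiv ℝ (fun x => f x i) z (Pi.single (j.succAbove l) 1) +
        p l * fderiv ℝ (fun x => f x i) z (Pi.single j 1) with hAval_def
    set el : Fin n → ℝ := Pi.single l 1 with hel_def
    set u : ℝ → (Fin n → ℝ) := fun θ => w + θ • el with hu_def
    have hu0 : u 0 = w := by simp [hu_def]
    have hu : HasDerivAt u el 0 := by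
      have h1 : HasDerivAt (fun θ : ℝ => θ • el) ((1:ℝ) • el) 0 :=
        (hasDerivAt_id 0).smul_const el
      simpa [hu_def] using h1.const_add w
    set q : ℝ → ℝ := fun θ => f (g (u θ)) i with hq_def
    have hq : HasDerivAt q Aval 0 := by
      have h2 : HasFDerivAt (fun y => f (g y) i)
          ((fderiv ℝ (fun x => f x i) z).comp G) (u 0) := by rw [hu0]; exact chain i
      have h3 := h2.comp_hasDerivAt 0 hu
      have h4 : ((fderiv ℝ (fun x => f x i) z).comp G) el = Aval := by
        rw [ContinuousLinearMap.comp_apply, hGsingle l, map_add,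
          ContinuousLinearMap.map_smul, smul_eq_mul, hAval_def]
      rw [h4] at h3
      exact h3
    have hq0 : q 0 = 0 := by rw [hq_def]; simp only [hu0, hgw, hfz]; rfl
    -- slope control
    have habs0 : 0 < |Aval| := abs_pos.2 hA0
    have hslope : {θ : ℝ | |slope q 0 θ - Aval| < |Aval|} ∈ nhdsWithin (0:ℝ) {(0:ℝ)}ᶜ := by
      have h5 := hasDerivAt_iff_tendsto_slope.1 hq
      have h6 := h5 (Metric.ball_mem_nhds Aval habs0)
      have h7 : slope q 0 ⁻¹' Metric.ball Aval |Aval| = {θ : ℝ | |slope q 0 θ - Aval| < |Aval|} := by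
        ext θ; simp [Metric.mem_ball, Real.dist_eq]
      rw [← h7]; exact h6
    rw [Metric.mem_nhdsWithin_iff] at hslope
    obtain ⟨r, hr0, hr⟩ := hslope
    have hrq : ∀ θ : ℝ, θ ≠ 0 → |θ| < r → |q θ / θ - Aval| < |Aval| := by
      intro θ hθ0 hθr
      have hmem : θ ∈ Metric.ball (0:ℝ) r ∩ {(0:ℝ)}ᶜ :=
        ⟨by rwa [Metric.mem_ball, Real.dist_eq, sub_zero], hθ0⟩
      have := hr hmem
      simpa [slope_def_field, hq0] using this
    -- continuity of g
    have hgcont : ∀ y ∈ ((fun x : Fin (n+1) → ℝ => x ∘ j.succAbove) '' Ω),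
        ContinuousAt g y := by
      intro y hy
      have hψy : DifferentiableAt ℝ ψ y := hψdiff.differentiableAt (hOpenImg.mem_nhds hy)
      rw [hgdecomp]
      exact (hψy.continuousAt.smul continuousAt_const).add
        (insertZeroCLM j).continuous.continuousAt
    -- radii
    obtain ⟨ε, hε0, hεball⟩ := Metric.isOpen_iff.1 hΩ z hz
    obtain ⟨t₁, ht₁0, ht₁⟩ := Metric.continuousAt_iff.1 (hgcont w hwmem) (ε/2) (by linarith)
    obtain ⟨t₂, ht₂0, ht₂⟩ := Metric.isOpen_iff.1 hOpenImg w hwmem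
    obtain ⟨t, ht0, htr, htt₁, htt₂⟩ :
        ∃ t : ℝ, 0 < t ∧ t < r ∧ t < t₁ ∧ t < t₂ := by
      refine ⟨min r (min t₁ t₂) / 2, ?_, ?_, ?_, ?_⟩
      · have := lt_min hr0 (lt_min ht₁0 ht₂0); linarith
      · have h1 := min_le_left r (min t₁ t₂)
        have := lt_min hr0 (lt_min ht₁0 ht₂0); linarith
      · have h1 := (min_le_right r (min t₁ t₂)).trans (min_le_left t₁ t₂)
        have := lt_min hr0 (lt_min ht₁0 ht₂0); linarith
      · have h1 := (min_le_right r (min t₁ t₂)).trans (min_le_right t₁ t₂)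
        have := lt_min hr0 (lt_min ht₁0 ht₂0); linarith
    have hel_norm : ‖el‖ = 1 := by rw [hel_def, Pi.norm_single, norm_one]
    have hu_dist : ∀ θ : ℝ, dist (u θ) w = |θ| := by
      intro θ
      rw [hu_def]
      simp only [dist_eq_norm, add_sub_cancel_left]
      rw [norm_smul, hel_norm, Real.norm_eq_abs, mul_one]
    have humem : ∀ θ : ℝ, |θ| ≤ t →
        u θ ∈ ((fun x : Fin (n+1) → ℝ => x ∘ j.succAbove) '' Ω) := by
      intro θ hθ
      exact ht₂ (by rw [Metric.mem_ball, hu_dist]; linarith)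
    obtain ⟨δ, hδ0, hδt⟩ : ∃ δ : ℝ, 0 < δ ∧ δ * t < ε / 2 := by
      refine ⟨ε / (2 * (t + 1)), by positivity, ?_⟩
      have h1 : ε / (2 * (t + 1)) * (t + 1) = ε / 2 := by field_simp
      have h2 : ε / (2 * (t + 1)) * t < ε / (2 * (t + 1)) * (t + 1) := by
        have : (0:ℝ) < ε / (2 * (t + 1)) := by positivity
        nlinarith
      linarith
    -- the path
    set P : ℝ → (Fin (n+1) → ℝ) :=
      fun θ => g (u θ) + (δ * (t - |θ|)) • (Pi.single j 1 : Fin (n+1) → ℝ) with hP_def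
    have hPj : ∀ θ, P θ j = ψ (u θ) + δ * (t - |θ|) := by
      intro θ
      simp only [hP_def, hg_def, Pi.add_apply, Fin.insertNth_apply_same, Pi.smul_apply,
        Pi.single_eq_same, smul_eq_mul, mul_one]
    have hPproj : ∀ θ, (P θ) ∘ j.succAbove = u θ := by
      intro θ
      funext m
      simp only [hP_def, hg_def, Function.comp_apply, Pi.add_apply,
        Fin.insertNth_apply_succAbove, Pi.smul_apply, smul_eq_mul]
      rw [Pi.single_eq_of_ne (Fin.succAbove_ne j m), mul_zero, add_zero]
    have hPmem : ∀ θ : ℝ, |θ| ≤ t → P θ ∈ Ω := by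
      intro θ hθ
      apply hεball
      rw [Metric.mem_ball]
      have d1 : dist (P θ) (g (u θ)) ≤ δ * t := by
        rw [hP_def]
        simp only [dist_self_add_left]
        rw [norm_smul, Pi.norm_single, norm_one, mul_one, Real.norm_eq_abs]
        rw [abs_of_nonneg (by nlinarith [abs_nonneg θ] : (0:ℝ) ≤ δ * (t - |θ|))]
        nlinarith [abs_nonneg θ]
      have d2 : dist (g (u θ)) z < ε / 2 := by
        have := ht₁ (by rw [hu_dist]; linarith : dist (u θ) w < t₁)
        rwa [hgw] at this
      calc dist (P θ) z ≤ dist (P θ) (g (u θ)) + dist (g (u θ)) z := dist_triangle _ _ _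
        _ < ε := by linarith
    -- continuity of the path composition
    set hfn : ℝ → ℝ := fun θ => f (P θ) i with hfn_def
    have hcont : ContinuousOn hfn (Set.uIcc (-t) t) := by
      rw [Set.uIcc_of_le (by linarith : -t ≤ t)]
      intro θ hθ
      have hθt : |θ| ≤ t := abs_le.2 ⟨hθ.1, hθ.2⟩
      apply ContinuousAt.continuousWithinAt
      have hucont : ContinuousAt u θ := by
        rw [hu_def]
        exact (continuous_const.add ((continuous_id).smul continuous_const)).continuousAt
      have hPcont : ContinuousAt P θ := by
        rw [hP_def]
        have c1 : ContinuousAt (fun θ : ℝ => g (u θ)) θ :=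
          (hgcont (u θ) (humem θ hθt)).comp hucont
        have c2 : Continuous (fun θ : ℝ =>
            (δ * (t - |θ|)) • (Pi.single j 1 : Fin (n+1) → ℝ)) :=
          (continuous_const.mul (continuous_const.sub continuous_abs)).smul continuous_const
        exact c1.add c2.continuousAt
      have hfcont : ContinuousAt (fun x => f x i) (P θ) := by
        exact ((continuous_apply i).continuousAt).comp
          (hf.continuousOn.continuousAt (hΩ.mem_nhds (hPmem θ hθt)))
      exact hfcont.comp hPcont
    -- endpoints
    have habs_t : |t| = t := abs_of_pos ht0
    have habs_mt : |(-t : ℝ)| = t := by rw [abs_neg, habs_t]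
    have hPt : P t = g (u t) := by
      rw [hP_def]; simp [habs_t]
    have hPmt : P (-t) = g (u (-t)) := by
      rw [hP_def]; simp [habs_mt]
    have hqt : hfn t = q t := by rw [hfn_def, hq_def]; simp only [hPt]
    have hqmt : hfn (-t) = q (-t) := by rw [hfn_def, hq_def]; simp only [hPmt]
    -- signs of the endpoints
    have hsA : ∀ s : ℝ, |s - Aval| < |Aval| → 0 < s * Aval := by
      intro s hs
      rcases lt_or_gt_of_ne (hA0 : Aval ≠ 0) with h | h
      · rw [abs_of_neg h] at hs
        have := abs_lt.1 hs
        nlinarith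
      · rw [abs_of_pos h] at hs
        have := abs_lt.1 hs
        nlinarith
    have hs₁ := hsA _ (hrq t (by linarith) (by rwa [habs_t]))
    have hs₂ := hsA _ (hrq (-t) (by linarith) (by rwa [habs_mt]))
    have hprod : q t * q (-t) < 0 := by
      have hA2 : 0 < Aval ^ 2 := by positivity
      set s₁ : ℝ := q t / t with hs1d
      set s₂ : ℝ := q (-t) / (-t) with hs2d
      have hq_t : q t = s₁ * t := (div_mul_cancel₀ _ (ne_of_gt ht0)).symm
      have hq_mt : q (-t) = s₂ * (-t) := by
        rw [hs2d]
        exact (div_mul_cancel₀ _ (by linarith : (-t : ℝ) ≠ 0)).symm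
      rw [hq_t, hq_mt]
      have hss : 0 < s₁ * s₂ := by nlinarith [mul_pos hs₁ hs₂, hA2]
      nlinarith [mul_pos hss (mul_pos ht0 ht0)]
    -- IVT
    have h0mem : (0:ℝ) ∈ Set.uIcc (hfn (-t)) (hfn t) := by
      rw [hqt, hqmt]
      rcases mul_neg_iff.1 hprod with ⟨h1, h2⟩ | ⟨h1, h2⟩
      · exact Set.mem_uIcc.2 (Or.inl ⟨le_of_lt h2, le_of_lt h1⟩)
      · exact Set.mem_uIcc.2 (Or.inr ⟨le_of_lt h1, le_of_lt h2⟩)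
    obtain ⟨θ₀, hθ₀mem, hθ₀⟩ := intermediate_value_uIcc hcont h0mem
    rw [Set.uIcc_of_le (by linarith : -t ≤ t)] at hθ₀mem
    have hθ₀t : |θ₀| ≤ t := abs_le.2 ⟨hθ₀mem.1, hθ₀mem.2⟩
    have hP0 : P θ₀ ∈ Ω := hPmem θ₀ hθ₀t
    have hψ0 := hψ (P θ₀) hP0 hθ₀
    rw [hPj, hPproj] at hψ0
    have hzero : t - |θ₀| = 0 := by
      have : δ * (t - |θ₀|) = 0 := by linarith
      rcases mul_eq_zero.1 this with h | h
      · exact absurd h (ne_of_gt hδ0)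
      · exact h
    have habs : |θ₀| = t := by linarith
    rcases (abs_eq (le_of_lt ht0)).1 habs with h | h
    · rw [h] at hθ₀
      rw [hqt] at hθ₀
      rw [hθ₀, zero_mul] at hprod
      exact lt_irrefl 0 hprod
    · rw [h] at hθ₀
      rw [hqmt] at hθ₀
      rw [hθ₀, mul_zero] at hprod
      exact lt_irrefl 0 hprod
  -- the determinant computation
  set A : Matrix (Fin (n+1)) (Fin (n+1)) ℝ := jacobianMatrix f z with hA_def
  set v : Fin (n+1) → ℝ := j.insertNth (0:ℝ) p with hv_def
  have hvj : v j = 0 := by simp [hv_def]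
  have hvs : ∀ l, v (j.succAbove l) = p l := by intro l; simp [hv_def]
  set E : Matrix (Fin (n+1)) (Fin (n+1)) ℝ :=
    1 + Matrix.replicateCol (Fin 1) (Pi.single j 1 : Fin (n+1) → ℝ) * Matrix.replicateRow (Fin 1) v with hE_def
  have hdetE : E.det = 1 := by
    rw [hE_def]; refine (Matrix.det_one_add_replicateCol_mul_replicateRow (ι := Fin 1) (Pi.single j 1 : Fin (n+1) → ℝ) v).trans ?_
    rw [dotProduct_single, hvj, zero_mul, add_zero]
  set A' : Matrix (Fin (n+1)) (Fin (n+1)) ℝ :=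
    Matrix.of (fun k m => A k m + A k j * v m) with hA'_def
  have hAE : A' = A * E := by
    ext k m
    rw [hE_def, Matrix.mul_add, Matrix.mul_one, Matrix.add_apply]
    have hcr : (Matrix.replicateCol (Fin 1) (Pi.single j (1:ℝ)) * Matrix.replicateRow (Fin 1) v) =
        Matrix.of (fun b m => (Pi.single j 1 : Fin (n+1) → ℝ) b * v m) := by
      ext b m'
      simp [Matrix.mul_apply]
    rw [hcr]
    have : (A * Matrix.of fun b m => (Pi.single j 1 : Fin (n+1) → ℝ) b * v m) k m = A k j * v m := by
      rw [Matrix.mul_apply]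
      rw [Finset.sum_eq_single j]
      · simp
      · intro b _ hb
        simp [Pi.single_apply, hb]
      · intro h; exact absurd (Finset.mem_univ j) h
    rw [this]
    rfl
  have hdetAA' : A'.det = A.det := by
    rw [hAE, Matrix.det_mul, hdetE, mul_one]
  have hA'ij : A' i j = A i j := by
    simp [hA'_def, hvj]
  have hA'i0 : ∀ m, m ≠ j → A' i m = 0 := by
    intro m hm
    obtain ⟨l, rfl⟩ := Fin.exists_succAbove_eq hm
    have hk := key l
    have h1 : A i (j.succAbove l) = fderiv ℝ (fun x => f x i) z (Pi.single (j.succAbove l) 1) := by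
      rw [hA_def]; rfl
    have h2 : A i j = fderiv ℝ (fun x => f x i) z (Pi.single j 1) := by
      rw [hA_def]; rfl
    simp only [hA'_def, Matrix.of_apply, hvs, h1, h2]
    linarith [hk]
  have hsub : A'.submatrix i.succAbove j.succAbove =
      jacobianMatrix (fun y k => f (j.insertNth (ψ y) y) (i.succAbove k)) w := by
    ext k l
    have hc := chain_single (i.succAbove k) l
    have hfun : (fun y => f (j.insertNth (ψ y) y) (i.succAbove k)) =
        (fun y => f (g y) (i.succAbove k)) := by rw [hg_def]
    have hrhs : jacobianMatrix (fun y k => f (j.insertNth (ψ y) y) (i.succAbove k)) w k l =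
        fderiv ℝ (fun y => f (g y) (i.succAbove k)) w (Pi.single l 1) := by
      rw [jacobianMatrix, Matrix.of_apply, ← hfun]
    rw [hrhs, hc]
    have h1 : A (i.succAbove k) (j.succAbove l) =
        fderiv ℝ (fun x => f x (i.succAbove k)) z (Pi.single (j.succAbove l) 1) := by
      rw [hA_def]; rfl
    have h2 : A (i.succAbove k) j =
        fderiv ℝ (fun x => f x (i.succAbove k)) z (Pi.single j 1) := by
      rw [hA_def]; rfl
    simp only [Matrix.submatrix_apply, hA'_def, Matrix.of_apply, hvs, h1, h2]
    ring
  have h2 : A i j = fderiv ℝ (fun x => f x i) z (Pi.single j 1) := by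
    rw [hA_def]; rfl
  calc A.det = A'.det := hdetAA'.symm
    _ = ∑ m : Fin (n+1), (-1:ℝ)^((i:ℕ)+(m:ℕ)) * A' i m *
          (A'.submatrix i.succAbove m.succAbove).det := Matrix.det_succ_row A' i
    _ = (-1:ℝ)^((i:ℕ)+(j:ℕ)) * A' i j * (A'.submatrix i.succAbove j.succAbove).det := by
        apply Finset.sum_eq_single_of_mem j (Finset.mem_univ j)
        intro m _ hm
        rw [hA'i0 m hm, mul_zero, zero_mul]
    _ = (-1 : ℝ) ^ ((i : ℕ) + (j : ℕ)) *
          fderiv ℝ (fun x => f x i) z (Pi.single j 1) *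
          (jacobianMatrix (fun y k => f (j.insertNth (ψ y) y) (i.succAbove k)) w).det := by
        rw [hA'ij, hsub, h2]
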